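/- arXiv:2309.05225 — 2 statements merged into one kernel-verified Lean document; each statement's English description precedes it below -/
import Mathlib

section
/- Let X be a compact metric space, f_{0,∞} a sequence of continuous self-maps, A an increasing sequence of nonnegative integers, and k ≥ 1. Then the topological sequence entropy of the k-fold product system (X^k, f_{0,∞}^{(k)}) along A equals k times that of (X, f_{0,∞}): h_A(f_{0,∞}^{(k)}) = k·h_A(f_{0,∞}). -/
open Filter Set MeasureTheory

/-- `nacomp f i n = f (i+n-1) ∘ ⋯ ∘ f i`, the `n`-fold composition of the
nonautonomous system starting at index `i`. -/
def nacomp {X : Type*} (f : ℕ → X → X) (i : ℕ) : ℕ → X → X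
  | 0 => id
  | n + 1 => f (i + n) ∘ nacomp f i n

/-- `E` is an `(n, ε, A)`-separated subset of `Λ` for the nonautonomous system `f`. -/
def IsSepSet {X : Type*} [PseudoMetricSpace X] (f : ℕ → X → X) (A : ℕ → ℕ) (n : ℕ)
    (ε : ℝ) (Λ : Set X) (E : Finset X) : Prop :=
  ↑E ⊆ Λ ∧ ∀ x ∈ E, ∀ y ∈ E, x ≠ y →
    ∃ j : Fin n, ε < dist (nacomp f 0 (A j) x) (nacomp f 0 (A j) y)

/-- `s_n(ε, A, f, Λ)`: maximal cardinality of an `(n,ε,A)`-separated subset of `Λ`. -/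
noncomputable def maxSep {X : Type*} [PseudoMetricSpace X] (f : ℕ → X → X) (A : ℕ → ℕ)
    (n : ℕ) (ε : ℝ) (Λ : Set X) : ℕ :=
  sSup {m | ∃ E : Finset X, IsSepSet f A n ε Λ E ∧ E.card = m}

/-- Topological sequence entropy of `f` on `Λ` along `A`, via separated sets:
`lim_{ε → 0} limsup_n (1/n) log s_n(ε,A,f,Λ)`, the limit realized as a supremum over `ε > 0`. -/
noncomputable def sepEnt {X : Type*} [PseudoMetricSpace X] (f : ℕ → X → X) (A : ℕ → ℕ)
    (Λ : Set X) : EReal :=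
  ⨆ ε : {ε : ℝ // 0 < ε},
    limsup (fun n : ℕ => ((Real.log (maxSep f A n ε Λ) / n : ℝ) : EReal)) atTop

/-- A finite open cover of the whole space. -/
def IsFinOpenCover {X : Type*} [TopologicalSpace X] (𝒜 : Finset (Set X)) : Prop :=
  (∀ u ∈ 𝒜, IsOpen u) ∧ ⋃₀ ↑𝒜 = (univ : Set X)

/-- A cell `⋂_j (f_0^{a_j})⁻¹ (u j)` of the join `⋁_{j} f_0^{-a_j} 𝒜`. -/
def seqCell {X : Type*} (f : ℕ → X → X) (A : ℕ → ℕ) (n : ℕ) (u : Fin n → Set X) : Set X :=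
  ⋂ j : Fin n, nacomp f 0 (A j.1) ⁻¹' (u j)

/-- `N((⋁_{j=1}^n f_0^{-a_j} 𝒜)|_Λ)`: the minimal cardinality of a subfamily of the join
cover whose union contains `Λ`. -/
noncomputable def coverN {X : Type*} (f : ℕ → X → X) (A : ℕ → ℕ) (n : ℕ) (Λ : Set X)
    (𝒜 : Finset (Set X)) : ℕ :=
  sInf {m | ∃ S : Finset (Fin n → Set X), (∀ u ∈ S, ∀ j, u j ∈ 𝒜) ∧
    (Λ ⊆ ⋃ u ∈ S, seqCell f A n u) ∧ S.card = m}

/-- `h_A(f, Λ, 𝒜)`, the sequence entropy of `f` on `Λ` relative to the open cover `𝒜`. -/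
noncomputable def coverEntOf {X : Type*} (f : ℕ → X → X) (A : ℕ → ℕ) (Λ : Set X)
    (𝒜 : Finset (Set X)) : EReal :=
  limsup (fun n : ℕ => ((Real.log (coverN f A n Λ 𝒜) / n : ℝ) : EReal)) atTop

/-- `h_A(f, Λ)`: topological sequence entropy via open covers. -/
noncomputable def coverEnt {X : Type*} [TopologicalSpace X] (f : ℕ → X → X) (A : ℕ → ℕ)
    (Λ : Set X) : EReal :=
  ⨆ 𝒜 : {𝒜 : Finset (Set X) // IsFinOpenCover 𝒜}, coverEntOf f A Λ 𝒜

/-- The supremum topological sequence entropy `h*(f) = sup_A h_A(f)`. -/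
noncomputable def supSeqEnt {X : Type*} [PseudoMetricSpace X] (f : ℕ → X → X) : EReal :=
  ⨆ A : {A : ℕ → ℕ // StrictMono A}, sepEnt f A univ

/-- The `n`-th compositions system `f_{0,∞}^n`, whose `k`-th map is `f_{kn}^n`. -/
def compSys {X : Type*} (f : ℕ → X → X) (n : ℕ) : ℕ → X → X :=
  fun k => nacomp f (k * n) n

/-- A finite measurable partition of the space. -/
def IsFinMeasPartition {X : Type*} [MeasurableSpace X] (P : Finset (Set X)) : Prop :=
  (∀ s ∈ P, MeasurableSet s) ∧ ((P : Set (Set X)).PairwiseDisjoint id) ∧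
    ⋃₀ ↑P = (univ : Set X)

/-- `h_{A,μ}(f, P) = limsup (1/n) H_μ(⋁_{j=1}^n f_0^{-a_j} P)`. -/
noncomputable def measSeqEntPart {X : Type*} [MeasurableSpace X] (μ : Measure X)
    (f : ℕ → X → X) (A : ℕ → ℕ) (P : Finset (Set X)) : EReal :=
  limsup (fun n : ℕ =>
    (((∑ u : Fin n → {s // s ∈ P},
        Real.negMulLog (μ (seqCell f A n (fun j => (u j : Set X)))).toReal) / n : ℝ) : EReal))
    atTop

/-- The measure-theoretic sequence entropy `h_{A,μ}(f)`. -/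
noncomputable def measSeqEnt {X : Type*} [MeasurableSpace X] (μ : Measure X)
    (f : ℕ → X → X) (A : ℕ → ℕ) : EReal :=
  ⨆ P : {P : Finset (Set X) // IsFinMeasPartition P}, measSeqEntPart μ f A P

/-- Covering dimension at most `d`: every finite open cover has a finite open refinement
of order at most `d + 1`. -/
def HasCovDimLE (X : Type*) [TopologicalSpace X] (d : ℕ) : Prop :=
  ∀ 𝒜 : Finset (Set X), IsFinOpenCover 𝒜 → ∃ ℬ : Finset (Set X), IsFinOpenCover ℬ ∧
    (∀ v ∈ ℬ, ∃ u ∈ 𝒜, v ⊆ u) ∧ ∀ x : X, ({v : Set X | v ∈ ℬ ∧ x ∈ v}).ncard ≤ d + 1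

/-- The induced nonautonomous system `f̂` on the space of Borel probability measures,
carrying the Lévy–Prokhorov (Prohorov) metric: `f̂ n μ = (f n)_* μ`. -/
noncomputable def inducedSys {X : Type*} [MeasurableSpace X] (f : ℕ → X → X)
    (hf : ∀ n, Measurable (f n)) :
    ℕ → LevyProkhorov (ProbabilityMeasure X) → LevyProkhorov (ProbabilityMeasure X) :=
  fun n μ => (LevyProkhorov.toMeasureEquiv (α := ProbabilityMeasure X)).symm
    (((LevyProkhorov.toMeasureEquiv (α := ProbabilityMeasure X)) μ).map (hf n).aemeasurable)

/-- Multi-sensitivity of a nonautonomous system. -/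
def MultiSensitive {X : Type*} [PseudoMetricSpace X] (f : ℕ → X → X) : Prop :=
  ∃ δ : ℝ, 0 < δ ∧ ∀ (k : ℕ) (V : Fin k → Set X),
    (∀ i, IsOpen (V i)) → (∀ i, (V i).Nonempty) →
      ∃ n : ℕ, 1 ≤ n ∧ ∀ i, δ < Metric.diam (nacomp f 0 n '' V i)


section SepEntPowAux

open Fintype

variable {X : Type*}

/-- `nacomp` for a product system acts coordinatewise. -/
lemma nacomp_pi {k : ℕ} (f : ℕ → X → X) (i n : ℕ) (x : Fin k → X) :
    nacomp (fun n (x : Fin k → X) => fun i => f n (x i)) i n x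
      = fun j => nacomp f i n (x j) := by
  induction n with
  | zero => rfl
  | succ n ih => simp [nacomp, ih]

/-- The empty set is separated, so the defining set of `maxSep` is nonempty. -/
lemma sep_zero_mem (f : ℕ → X → X) [PseudoMetricSpace X] (A : ℕ → ℕ) (n : ℕ) (ε : ℝ)
    (Λ : Set X) : 0 ∈ {m | ∃ E : Finset X, IsSepSet f A n ε Λ E ∧ E.card = m} :=
  ⟨∅, ⟨by simp, by simp⟩, rfl⟩

/-- In a compact metric space, cardinalities of separated sets are bounded. -/
lemma sep_card_bdd [MetricSpace X] [CompactSpace X] (f : ℕ → X → X) (A : ℕ → ℕ) (n : ℕ)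
    {ε : ℝ} (hε : 0 < ε) (Λ : Set X) :
    BddAbove {m | ∃ E : Finset X, IsSepSet f A n ε Λ E ∧ E.card = m} := by
  classical
  set Φ : X → (Fin n → X) := fun x j => nacomp f 0 (A j.1) x with hΦ
  obtain ⟨t, -, htfin, htcov⟩ :=
    finite_cover_balls_of_compact (isCompact_univ (X := Fin n → X)) (half_pos hε)
  refine ⟨htfin.toFinset.card, ?_⟩
  rintro m ⟨E, ⟨-, hsep⟩, rfl⟩
  have key : ∀ x ∈ E, ∃ c ∈ htfin.toFinset, Φ x ∈ Metric.ball c (ε / 2) := by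
    intro x hx
    have := htcov (mem_univ (Φ x))
    simp only [mem_iUnion, exists_prop] at this
    obtain ⟨c, hc, hcb⟩ := this
    exact ⟨c, htfin.mem_toFinset.2 hc, hcb⟩
  choose c hc hcb using key
  have : E.attach.card ≤ htfin.toFinset.card := by
    refine Finset.card_le_card_of_injOn (fun x => c x.1 x.2) (fun x _ => hc x.1 x.2) ?_
    intro x _ y _ hxy
    by_contra hne
    have hne' : x.1 ≠ y.1 := fun h => hne (Subtype.ext h)
    obtain ⟨j, hj⟩ := hsep x.1 x.2 y.1 y.2 hne'
    have h1 : dist (Φ x.1 j) (Φ y.1 j) ≤ dist (Φ x.1) (Φ y.1) := dist_le_pi_dist _ _ _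
    have h2 : dist (Φ x.1) (Φ y.1) < ε := by
      calc dist (Φ x.1) (Φ y.1) ≤ dist (Φ x.1) (c x.1 x.2) + dist (c x.1 x.2) (Φ y.1) :=
            dist_triangle _ _ _
        _ < ε / 2 + ε / 2 := by
            refine add_lt_add (hcb x.1 x.2) ?_
            have hxy' : c x.1 x.2 = c y.1 y.2 := hxy
            rw [dist_comm, hxy']
            exact hcb y.1 y.2
        _ = ε := add_halves ε
    exact absurd (lt_of_lt_of_le hj h1) (not_lt.2 h2.le)
  simpa using this

lemma maxSep_le' [MetricSpace X] (f : ℕ → X → X) (A : ℕ → ℕ) (n : ℕ) (ε : ℝ) (Λ : Set X)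
    (M : ℕ) (h : ∀ E : Finset X, IsSepSet f A n ε Λ E → E.card ≤ M) :
    maxSep f A n ε Λ ≤ M := by
  refine csSup_le ⟨0, sep_zero_mem f A n ε Λ⟩ ?_
  rintro m ⟨E, hE, rfl⟩
  exact h E hE

lemma le_maxSep' [MetricSpace X] [CompactSpace X] (f : ℕ → X → X) (A : ℕ → ℕ) (n : ℕ)
    {ε : ℝ} (hε : 0 < ε) (Λ : Set X) {E : Finset X} (hE : IsSepSet f A n ε Λ E) :
    E.card ≤ maxSep f A n ε Λ :=
  le_csSup (sep_card_bdd f A n hε Λ) ⟨E, hE, rfl⟩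

lemma exists_maxSep [MetricSpace X] [CompactSpace X] (f : ℕ → X → X) (A : ℕ → ℕ) (n : ℕ)
    {ε : ℝ} (hε : 0 < ε) (Λ : Set X) :
    ∃ E : Finset X, IsSepSet f A n ε Λ E ∧ E.card = maxSep f A n ε Λ :=
  Nat.sSup_mem ⟨0, sep_zero_mem f A n ε Λ⟩ (sep_card_bdd f A n hε Λ)

/-- A maximal separated set is spanning. -/
lemma exists_spanning [MetricSpace X] [CompactSpace X] (f : ℕ → X → X) (A : ℕ → ℕ) (n : ℕ)
    {ε : ℝ} (hε : 0 < ε) :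
    ∃ D : Finset X, D.card = maxSep f A n ε univ ∧
      ∀ x : X, ∃ y ∈ D, ∀ j : Fin n, dist (nacomp f 0 (A j.1) x) (nacomp f 0 (A j.1) y) ≤ ε := by
  classical
  obtain ⟨D, hD, hcard⟩ := exists_maxSep f A n hε univ
  refine ⟨D, hcard, fun x => ?_⟩
  by_contra hcon
  push_neg at hcon
  have hxD : x ∉ D := by
    intro hx
    obtain ⟨j, hj⟩ := hcon x hx
    simp at hj
    exact absurd (hj.trans hε) (lt_irrefl _)
  have hsep : IsSepSet f A n ε univ (insert x D) := by
    refine ⟨subset_univ _, ?_⟩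
    intro a ha b hb hab
    rcases Finset.mem_insert.1 ha with rfl | haD
    · rcases Finset.mem_insert.1 hb with rfl | hbD
      · exact absurd rfl hab
      · obtain ⟨j, hj⟩ := hcon b hbD
        exact ⟨j, hj⟩
    · rcases Finset.mem_insert.1 hb with rfl | hbD
      · obtain ⟨j, hj⟩ := hcon a haD
        exact ⟨j, by rwa [dist_comm]⟩
      · exact hD.2 a haD b hbD hab
  have hle := le_maxSep' f A n hε univ hsep
  rw [Finset.card_insert_of_notMem hxD, hcard] at hle
  omega

/-- Lower counting bound: a separated set in the base gives a product separated set. -/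
lemma maxSep_pow_le [MetricSpace X] [CompactSpace X] (f : ℕ → X → X) (A : ℕ → ℕ)
    (k n : ℕ) {ε : ℝ} (hε : 0 < ε) :
    maxSep f A n ε (univ : Set X) ^ k
      ≤ maxSep (fun m (x : Fin k → X) => fun i => f m (x i)) A n ε univ := by
  classical
  set F := fun m (x : Fin k → X) => fun i => f m (x i) with hFdef
  obtain ⟨E, hE, hcard⟩ := exists_maxSep f A n hε univ
  have hsep : IsSepSet F A n ε univ (Fintype.piFinset fun _ : Fin k => E) := by
    refine ⟨subset_univ _, ?_⟩
    intro x hx y hy hxy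
    obtain ⟨i, hi⟩ := Function.ne_iff.1 hxy
    obtain ⟨j, hj⟩ := hE.2 (x i) (Fintype.mem_piFinset.1 hx i) (y i)
      (Fintype.mem_piFinset.1 hy i) hi
    refine ⟨j, lt_of_lt_of_le hj ?_⟩
    have h2 := dist_le_pi_dist (nacomp F 0 (A j.1) x) (nacomp F 0 (A j.1) y) i
    simpa [hFdef, nacomp_pi] using h2
  have hle := le_maxSep' F A n hε univ hsep
  rw [Fintype.card_piFinset, Finset.prod_const, hcard, Finset.card_univ, Fintype.card_fin] at hle
  exact hle

/-- Upper counting bound via spanning sets. -/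
lemma maxSep_le_pow [MetricSpace X] [CompactSpace X] (f : ℕ → X → X) (A : ℕ → ℕ)
    (k n : ℕ) {ε : ℝ} (hε : 0 < ε) :
    maxSep (fun m (x : Fin k → X) => fun i => f m (x i)) A n ε (univ : Set (Fin k → X))
      ≤ maxSep f A n (ε / 2) univ ^ k := by
  classical
  set F := fun m (x : Fin k → X) => fun i => f m (x i) with hFdef
  obtain ⟨D, hDcard, hspan⟩ := exists_spanning f A n (half_pos hε)
  refine maxSep_le' F A n ε univ _ (fun E hE => ?_)
  choose sp hspD hsp using hspan
  have hcardle : E.attach.card ≤ (Fintype.piFinset fun _ : Fin k => D).card := by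
    refine Finset.card_le_card_of_injOn (fun z => fun i => sp (z.1 i))
      (fun z _ => Fintype.mem_piFinset.2 fun i => hspD _) ?_
    intro z _ w _ hzw
    by_contra hne
    have hne' : z.1 ≠ w.1 := fun h => hne (Subtype.ext h)
    obtain ⟨j, hj⟩ := hE.2 z.1 z.2 w.1 w.2 hne'
    have hle : dist (nacomp F 0 (A j.1) z.1) (nacomp F 0 (A j.1) w.1) ≤ ε := by
      rw [hFdef, nacomp_pi, nacomp_pi, dist_pi_le_iff hε.le]
      intro i
      have h1 := hsp (z.1 i) j
      have h2 := hsp (w.1 i) j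
      have heq : sp (z.1 i) = sp (w.1 i) := congrFun hzw i
      calc dist (nacomp f 0 (A j.1) (z.1 i)) (nacomp f 0 (A j.1) (w.1 i))
          ≤ dist (nacomp f 0 (A j.1) (z.1 i)) (nacomp f 0 (A j.1) (sp (z.1 i)))
            + dist (nacomp f 0 (A j.1) (sp (z.1 i))) (nacomp f 0 (A j.1) (w.1 i)) :=
            dist_triangle _ _ _
        _ ≤ ε / 2 + ε / 2 := add_le_add h1 (by rw [heq, dist_comm]; exact h2)
        _ = ε := add_halves ε
    exact absurd hj (not_lt.2 hle)
  calc E.card = E.attach.card := (Finset.card_attach).symm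
    _ ≤ (Fintype.piFinset fun _ : Fin k => D).card := hcardle
    _ = maxSep f A n (ε / 2) univ ^ k := by
        rw [Fintype.card_piFinset, Finset.prod_const, hDcard, Finset.card_univ, Fintype.card_fin]

lemma log_nat_mono {a b : ℕ} (h : a ≤ b) : Real.log a ≤ Real.log b := by
  rcases Nat.eq_zero_or_pos a with rfl | ha
  · simpa using Real.log_natCast_nonneg b
  · exact Real.log_le_log (by exact_mod_cast ha) (by exact_mod_cast h)

lemma ereal_const_mul_le_iff {c : ℝ} (hc : 0 < c) {a b : EReal} :
    (c : EReal) * a ≤ (c : EReal) * b ↔ a ≤ b := by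
  constructor
  · intro h
    have hinv : (0 : EReal) ≤ ((c⁻¹ : ℝ) : EReal) := by
      rw [EReal.coe_nonneg]; positivity
    have h2 := mul_le_mul_of_nonneg_left h hinv
    rwa [← mul_assoc, ← mul_assoc, ← EReal.coe_mul, inv_mul_cancel₀ hc.ne', EReal.coe_one,
      one_mul, one_mul] at h2
  · intro h
    exact mul_le_mul_of_nonneg_left h (by rw [EReal.coe_nonneg]; exact hc.le)

/-- Multiplication by a positive real constant as an order isomorphism of `EReal`. -/
noncomputable def erealMulIso {c : ℝ} (hc : 0 < c) : EReal ≃o EReal where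
  toFun x := (c : EReal) * x
  invFun x := ((c⁻¹ : ℝ) : EReal) * x
  left_inv x := by
    show ((c⁻¹ : ℝ) : EReal) * ((c : EReal) * x) = x
    rw [← mul_assoc, ← EReal.coe_mul, inv_mul_cancel₀ hc.ne', EReal.coe_one, one_mul]
  right_inv x := by
    show (c : EReal) * (((c⁻¹ : ℝ) : EReal) * x) = x
    rw [← mul_assoc, ← EReal.coe_mul, mul_inv_cancel₀ hc.ne', EReal.coe_one, one_mul]
  map_rel_iff' := ereal_const_mul_le_iff hc

lemma ereal_limsup_const_mul {c : ℝ} (hc : 0 < c) (u : ℕ → EReal) :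
    limsup (fun n => (c : EReal) * u n) atTop = (c : EReal) * limsup u atTop := by
  have h := (erealMulIso hc).limsup_apply (u := u) (f := atTop)
  exact h.symm

lemma ereal_iSup_const_mul {ι : Sort*} {c : ℝ} (hc : 0 < c) (u : ι → EReal) :
    ((c : EReal) * ⨆ i, u i) = ⨆ i, (c : EReal) * u i := by
  have h := (erealMulIso hc).map_iSup u
  exact h

end SepEntPowAux

/-- Sequence entropy of the `k`-fold product system is `k` times the sequence entropy. -/
theorem sepEnt_pow {X : Type*} [MetricSpace X] [CompactSpace X]
    (f : ℕ → X → X) (hf : ∀ n, Continuous (f n))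
    (A : ℕ → ℕ) (hA : StrictMono A) (k : ℕ) (hk : 1 ≤ k) :
    sepEnt (fun n (x : Fin k → X) => fun i => f n (x i)) A univ
      = (k : EReal) * sepEnt f A univ := by
  classical
  have hkpos : (0 : ℝ) < (k : ℝ) := by exact_mod_cast hk
  set L : ℝ → EReal := fun ε =>
    limsup (fun n : ℕ => ((Real.log (maxSep f A n ε univ) / n : ℝ) : EReal)) atTop with hL
  set Lp : ℝ → EReal := fun ε =>
    limsup (fun n : ℕ =>
      ((Real.log (maxSep (fun m (x : Fin k → X) => fun i => f m (x i)) A n ε univ) / n : ℝ)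
        : EReal)) atTop with hLp
  have hcoe : (k : EReal) = (((k : ℝ)) : EReal) := rfl
  -- `g` applied to the base limsup
  have klim : ∀ ε : ℝ, ((k : ℝ) : EReal) * L ε =
      limsup (fun n : ℕ =>
        (((k : ℝ) * Real.log (maxSep f A n ε univ) / n : ℝ) : EReal)) atTop := by
    intro ε
    rw [show L ε = limsup (fun n : ℕ =>
        ((Real.log (maxSep f A n ε univ) / n : ℝ) : EReal)) atTop from rfl,
      ← ereal_limsup_const_mul hkpos]
    congr 1
    funext n
    rw [← EReal.coe_mul, mul_div_assoc]
  -- pointwise bounds on limsups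
  have key_lo : ∀ ε : ℝ, 0 < ε → ((k : ℝ) : EReal) * L ε ≤ Lp ε := by
    intro ε hε
    rw [klim ε, hLp]
    refine limsup_le_limsup (Eventually.of_forall fun n => ?_)
    rw [EReal.coe_le_coe_iff]
    have h1 : maxSep f A n ε univ ^ k
        ≤ maxSep (fun m (x : Fin k → X) => fun i => f m (x i)) A n ε univ :=
      maxSep_pow_le f A k n hε
    have h2 : (k : ℝ) * Real.log (maxSep f A n ε univ)
        ≤ Real.log (maxSep (fun m (x : Fin k → X) => fun i => f m (x i)) A n ε univ) := by
      have := log_nat_mono h1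
      rwa [Nat.cast_pow, Real.log_pow] at this
    exact div_le_div_of_nonneg_right h2 (by positivity) |>.trans_eq rfl
  have key_hi : ∀ ε : ℝ, 0 < ε → Lp ε ≤ ((k : ℝ) : EReal) * L (ε / 2) := by
    intro ε hε
    rw [klim (ε / 2), hLp]
    refine limsup_le_limsup (Eventually.of_forall fun n => ?_)
    rw [EReal.coe_le_coe_iff]
    have h1 : maxSep (fun m (x : Fin k → X) => fun i => f m (x i)) A n ε univ
        ≤ maxSep f A n (ε / 2) univ ^ k := maxSep_le_pow f A k n hε
    have h2 : Real.log (maxSep (fun m (x : Fin k → X) => fun i => f m (x i)) A n ε univ)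
        ≤ (k : ℝ) * Real.log (maxSep f A n (ε / 2) univ) := by
      have := log_nat_mono h1
      rwa [Nat.cast_pow, Real.log_pow] at this
    exact div_le_div_of_nonneg_right h2 (by positivity)
  have hsepP : sepEnt (fun n (x : Fin k → X) => fun i => f n (x i)) A (univ : Set (Fin k → X))
      = ⨆ ε : {ε : ℝ // 0 < ε}, Lp ε.1 := rfl
  have hsepB : sepEnt f A (univ : Set X) = ⨆ ε : {ε : ℝ // 0 < ε}, L ε.1 := rfl
  rw [hsepP, hcoe, hsepB]
  apply le_antisymm
  · refine iSup_le fun ε => ?_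
    calc Lp ε.1 ≤ ((k : ℝ) : EReal) * L (ε.1 / 2) := key_hi ε.1 ε.2
      _ ≤ ((k : ℝ) : EReal) * ⨆ ε' : {ε : ℝ // 0 < ε}, L ε'.1 := by
          refine (ereal_const_mul_le_iff hkpos).2 ?_
          exact le_iSup (fun ε' : {ε : ℝ // 0 < ε} => L ε'.1) ⟨ε.1 / 2, half_pos ε.2⟩
  · have hmap : ((k : ℝ) : EReal) * (⨆ ε' : {ε : ℝ // 0 < ε}, L ε'.1)
        = ⨆ ε' : {ε : ℝ // 0 < ε}, ((k : ℝ) : EReal) * L ε'.1 :=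
      ereal_iSup_const_mul hkpos fun ε' : {ε : ℝ // 0 < ε} => L ε'.1
    rw [hmap]
    refine iSup_le fun ε => ?_
    exact le_trans (key_lo ε.1 ε.2) (le_iSup (fun ε' : {ε : ℝ // 0 < ε} => Lp ε'.1) ε)
end

section
/- Let X be a compact metric space, f_{0,∞} a sequence of continuous self-maps, k ≥ 1, and A = {k^i}_{i=1}^∞. Then h_A(f_{0,∞}^{k^n}) = h_A(f_{0,∞}) for every n ≥ 1, where f_{0,∞}^{m} denotes the m-th compositions system. -/
open Filter Set MeasureTheory

lemma nacomp_continuous {X : Type*} [TopologicalSpace X] {f : ℕ → X → X}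
    (hf : ∀ m, Continuous (f m)) (i j : ℕ) : Continuous (nacomp f i j) := by
  induction j with
  | zero => exact continuous_id
  | succ j ih => exact (hf _).comp ih

section Net
variable {X : Type*} [MetricSpace X] [CompactSpace X]

/-- Finite "uniformity net": an assignment of points to finitely many classes such that
points in the same class have all their first `N` orbit-images `ε`-close. -/
lemma exists_net (f : ℕ → X → X) (hf : ∀ m, Continuous (f m)) (B : ℕ → ℕ) (N : ℕ)
    {ε : ℝ} (hε : 0 < ε) :
    ∃ (t : Finset X) (φ : X → X), (∀ x, φ x ∈ t) ∧
      ∀ x y, φ x = φ y → ∀ j : Fin N, ε < dist (nacomp f 0 (B j) x) (nacomp f 0 (B j) y) → False := by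
  set G : X → (Fin N → X) := fun x j => nacomp f 0 (B j) x with hG
  have hGc : Continuous G := continuous_pi fun j => nacomp_continuous hf 0 (B j)
  have hGu : UniformContinuous G := CompactSpace.uniformContinuous_of_continuous hGc
  obtain ⟨δ, hδ, hδε⟩ := Metric.uniformContinuous_iff.mp hGu ε hε
  obtain ⟨t, ht⟩ := isCompact_univ.elim_finite_subcover (fun c : X => Metric.ball c (δ / 2))
    (fun c => Metric.isOpen_ball) (fun x _ => mem_iUnion.2 ⟨x, Metric.mem_ball_self (by linarith)⟩)
  have hx : ∀ x : X, ∃ c, c ∈ t ∧ x ∈ Metric.ball c (δ / 2) := by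
    intro x
    have := ht (mem_univ x)
    simpa using this
  choose φ hφt hφb using hx
  refine ⟨t, φ, hφt, fun x y hxy j hsep => ?_⟩
  have hdxy : dist x y < δ := by
    have h1 := hφb x
    have h2 := hφb y
    rw [hxy] at h1
    have := dist_triangle_right x y (φ y)
    rw [Metric.mem_ball] at h1 h2
    linarith
  have := (dist_pi_lt_iff hε).mp (hδε hdxy) j
  simp only [hG] at this
  exact absurd hsep (not_lt.2 (le_of_lt this))

lemma card_le_of_classes [DecidableEq X] {E t : Finset X} {φ : X → X} (hφt : ∀ x, φ x ∈ t) {K : ℕ}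
    (h : ∀ c ∈ t, (E.filter (fun x => φ x = c)).card ≤ K) : E.card ≤ t.card * K := by
  classical
  have hsub : E ⊆ t.biUnion (fun c => E.filter (fun x => φ x = c)) := by
    intro x hx
    exact Finset.mem_biUnion.2 ⟨φ x, hφt x, Finset.mem_filter.2 ⟨hx, rfl⟩⟩
  calc E.card ≤ (t.biUnion (fun c => E.filter (fun x => φ x = c))).card :=
        Finset.card_le_card hsub
    _ ≤ ∑ c ∈ t, (E.filter (fun x => φ x = c)).card := Finset.card_biUnion_le
    _ ≤ t.card * K := by
        have := Finset.sum_le_card_nsmul t (fun c => (E.filter (fun x => φ x = c)).card) K h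
        simpa [smul_eq_mul] using this

/-- Uniform bound on cardinality of separated sets. -/
lemma sepSet_card_bdd (f : ℕ → X → X) (hf : ∀ m, Continuous (f m)) (B : ℕ → ℕ) (N : ℕ)
    {ε : ℝ} (hε : 0 < ε) :
    ∃ C : ℕ, ∀ E : Finset X, IsSepSet f B N ε univ E → E.card ≤ C := by
  obtain ⟨t, φ, hφt, hnet⟩ := exists_net f hf B N hε
  classical
  refine ⟨t.card * 1, fun E hE => ?_⟩
  refine card_le_of_classes hφt (fun c _ => Finset.card_le_one.2 ?_)
  intro x hx y hy
  rw [Finset.mem_filter] at hx hy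
  by_contra hne
  obtain ⟨j, hj⟩ := hE.2 x hx.1 y hy.1 hne
  exact hnet x y (hx.2.trans hy.2.symm) j hj

lemma bddAbove_sepCards (f : ℕ → X → X) (hf : ∀ m, Continuous (f m)) (B : ℕ → ℕ) (N : ℕ)
    {ε : ℝ} (hε : 0 < ε) :
    BddAbove {m | ∃ E : Finset X, IsSepSet f B N ε univ E ∧ E.card = m} := by
  obtain ⟨C, hC⟩ := sepSet_card_bdd f hf B N hε
  exact ⟨C, fun m ⟨E, hE, hcard⟩ => hcard ▸ hC E hE⟩

lemma maxSep_pos [Nonempty X] (f : ℕ → X → X) (hf : ∀ m, Continuous (f m)) (B : ℕ → ℕ) (N : ℕ)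
    {ε : ℝ} (hε : 0 < ε) : 1 ≤ maxSep f B N ε univ := by
  obtain ⟨x⟩ := ‹Nonempty X›
  refine le_csSup (bddAbove_sepCards f hf B N hε) ⟨{x}, ⟨by simp, ?_⟩, Finset.card_singleton x⟩
  intro a ha b hb hab
  rw [Finset.mem_singleton] at ha hb
  exact absurd (ha.trans hb.symm) hab

end Net

section Compare
variable {X : Type*} [MetricSpace X] [CompactSpace X]

lemma isSepSet_empty [PseudoMetricSpace X] (f : ℕ → X → X) (A : ℕ → ℕ) (N : ℕ) (ε : ℝ) :
    IsSepSet f A N ε univ (∅ : Finset X) :=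
  ⟨by simp, by simp⟩

lemma maxSep_shift_le (f : ℕ → X → X) (hf : ∀ m, Continuous (f m)) (A : ℕ → ℕ) (n m : ℕ)
    {ε : ℝ} (hε : 0 < ε) :
    maxSep f (fun i => A (i + n)) m ε univ ≤ maxSep f A (m + n) ε univ := by
  refine csSup_le ⟨0, ∅, isSepSet_empty f _ m ε, rfl⟩ ?_
  rintro c ⟨E, hE, rfl⟩
  refine le_csSup (bddAbove_sepCards f hf A (m + n) hε) ⟨E, ⟨hE.1, ?_⟩, rfl⟩
  intro x hx y hy hxy
  obtain ⟨j, hj⟩ := hE.2 x hx y hy hxy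
  exact ⟨⟨j.1 + n, by omega⟩, hj⟩

lemma maxSep_cover_bound [Nonempty X] (f : ℕ → X → X) (hf : ∀ m, Continuous (f m))
    (A : ℕ → ℕ) (n : ℕ) {ε : ℝ} (hε : 0 < ε) :
    ∃ C : ℕ, 1 ≤ C ∧ ∀ m : ℕ,
      maxSep f A (m + n) ε univ ≤ C * maxSep f (fun i => A (i + n)) m ε univ := by
  classical
  obtain ⟨t, φ, hφt, hnet⟩ := exists_net f hf A n hε
  refine ⟨t.card, Finset.card_pos.2 ⟨φ (Classical.arbitrary X), hφt _⟩, fun m => ?_⟩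
  set K := maxSep f (fun i => A (i + n)) m ε univ with hK
  refine csSup_le ⟨0, ∅, isSepSet_empty f _ _ ε, rfl⟩ ?_
  rintro c ⟨E, hE, rfl⟩
  refine card_le_of_classes hφt (fun c hc => ?_)
  refine le_csSup (bddAbove_sepCards f hf _ m hε) ⟨E.filter (fun x => φ x = c), ⟨by simp, ?_⟩, rfl⟩
  intro x hx y hy hxy
  rw [Finset.mem_filter] at hx hy
  obtain ⟨j, hj⟩ := hE.2 x hx.1 y hy.1 hxy
  have hjn : n ≤ j.1 := by
    by_contra hlt
    exact hnet x y (hx.2.trans hy.2.symm) ⟨j.1, by omega⟩ hj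
  refine ⟨⟨j.1 - n, by omega⟩, ?_⟩
  have : j.1 - n + n = j.1 := Nat.sub_add_cancel hjn
  simpa [this] using hj

end Compare

/-- EReal limsup comparison helper. -/
lemma limsup_le_limsup_aux (a b : ℕ → ℝ) (hb0 : ∀ m, 0 ≤ b m)
    (H : ∀ c' c : ℝ, 0 < c' → c' < c → (∀ᶠ m in atTop, b m < c') → ∀ᶠ m in atTop, a m ≤ c) :
    limsup (fun m : ℕ => ((a m : ℝ) : EReal)) atTop
      ≤ limsup (fun m : ℕ => ((b m : ℝ) : EReal)) atTop := by
  set R := limsup (fun m : ℕ => ((b m : ℝ) : EReal)) atTop with hR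
  have hR0 : (0 : EReal) ≤ R := by
    have h0 : limsup (fun _ : ℕ => (0 : EReal)) atTop = 0 := limsup_const 0
    rw [← h0]
    refine limsup_le_limsup (Eventually.of_forall fun m => ?_)
    show (0 : EReal) ≤ ((b m : ℝ) : EReal)
    exact_mod_cast hb0 m
  by_cases hRtop : R = ⊤
  · rw [hRtop]; exact le_top
  have hRbot : R ≠ ⊥ := fun h => by simp [h] at hR0
  have hRr : ((R.toReal : ℝ) : EReal) = R := EReal.coe_toReal hRtop hRbot
  have hRr0 : 0 ≤ R.toReal := by
    rw [← EReal.coe_le_coe_iff, hRr]; exact_mod_cast hR0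
  refine le_of_forall_gt_imp_ge_of_dense fun c hc => ?_
  induction c using EReal.rec with
  | bot => exact absurd hc (not_lt.2 bot_le)
  | top => exact le_top
  | coe r =>
      have hrR : R.toReal < r := by
        rw [← EReal.coe_lt_coe_iff, hRr]; exact hc
      set c' := (R.toReal + r) / 2 with hc'
      have hr0 : 0 < r := lt_of_le_of_lt hRr0 hrR
      have hc'0 : 0 < c' := by rw [hc']; linarith
      have hc'r : c' < r := by rw [hc']; linarith
      have hbc' : ∀ᶠ m in atTop, b m < c' := by
        have hlt : R < ((c' : ℝ) : EReal) := by
          rw [← hRr, EReal.coe_lt_coe_iff, hc']; linarith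
        filter_upwards [eventually_lt_of_limsup_lt hlt] with m hm
        exact_mod_cast hm
      have := H c' r hc'0 hc'r hbc'
      refine limsup_le_of_le ?_ ?_
      · isBoundedDefault
      · filter_upwards [this] with m hm
        exact_mod_cast hm

section Main
variable {X : Type*} [MetricSpace X] [CompactSpace X] [Nonempty X]

lemma limsup_shift_le (f : ℕ → X → X) (hf : ∀ m, Continuous (f m)) (A : ℕ → ℕ) (n : ℕ)
    {ε : ℝ} (hε : 0 < ε) :
    limsup (fun m : ℕ =>
        ((Real.log (maxSep f (fun i => A (i + n)) m ε univ) / m : ℝ) : EReal)) atTop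
      ≤ limsup (fun m : ℕ => ((Real.log (maxSep f A m ε univ) / m : ℝ) : EReal)) atTop := by
  set s : ℕ → ℕ := fun m => maxSep f A m ε univ with hs
  set s' : ℕ → ℕ := fun m => maxSep f (fun i => A (i + n)) m ε univ with hs'
  have hs1 : ∀ m, 1 ≤ s m := fun m => maxSep_pos f hf A m hε
  have hs'1 : ∀ m, 1 ≤ s' m := fun m => maxSep_pos f hf _ m hε
  apply limsup_le_limsup_aux
  · intro m
    exact div_nonneg (Real.log_nonneg (by exact_mod_cast hs1 m)) (Nat.cast_nonneg m)
  · intro c' c hc'0 hc'c hev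
    have hcc' : 1 < c / c' := (one_lt_div hc'0).2 hc'c
    obtain ⟨N, hN⟩ := eventually_atTop.mp hev
    have hshift : ∀ᶠ m in atTop, Real.log (s (m + n)) / ((m : ℝ) + n) < c' := by
      refine eventually_atTop.2 ⟨N, fun m hm => ?_⟩
      have := hN (m + n) (by omega)
      push_cast at this ⊢
      convert this using 2
    have hq : ∀ᶠ m : ℕ in atTop, ((m : ℝ) + n) / m < c / c' := by
      have h0 : Tendsto (fun m : ℕ => ((n : ℝ) / m)) atTop (nhds 0) :=
        tendsto_const_div_atTop_nhds_zero_nat (n : ℝ)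
      have h2 : ∀ᶠ m : ℕ in atTop, (n : ℝ) / m < c / c' - 1 :=
        h0.eventually_lt_const (by linarith)
      filter_upwards [h2, eventually_ge_atTop 1] with m hm hm1
      have hm0 : (0 : ℝ) < m := by exact_mod_cast hm1
      rw [add_div, div_self (ne_of_gt hm0)]
      linarith
    filter_upwards [hshift, hq, eventually_ge_atTop 1] with m hb hq1 hm1
    have hm0 : (0 : ℝ) < m := by exact_mod_cast hm1
    have h1 : Real.log (s' m) ≤ Real.log (s (m + n)) := by
      refine Real.log_le_log (by exact_mod_cast hs'1 m) ?_
      exact_mod_cast maxSep_shift_le f hf A n m hε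
    have hlog0 : 0 ≤ Real.log (s (m + n)) / ((m : ℝ) + n) :=
      div_nonneg (Real.log_nonneg (by exact_mod_cast hs1 (m + n))) (by positivity)
    have heq : Real.log (s (m + n)) / (m : ℝ)
        = (Real.log (s (m + n)) / ((m : ℝ) + n)) * (((m : ℝ) + n) / m) := by
      field_simp
    have h2 : (Real.log (s (m + n)) / ((m : ℝ) + n)) * (((m : ℝ) + n) / m)
        < c' * (c / c') := mul_lt_mul'' hb hq1 hlog0 (by positivity)
    have h3 : c' * (c / c') = c := by field_simp
    have h4 : Real.log (s' m) / (m : ℝ) ≤ Real.log (s (m + n)) / (m : ℝ) := by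
      gcongr
    rw [heq] at h4
    linarith

lemma limsup_le_shift (f : ℕ → X → X) (hf : ∀ m, Continuous (f m)) (A : ℕ → ℕ) (n : ℕ)
    {ε : ℝ} (hε : 0 < ε) :
    limsup (fun m : ℕ => ((Real.log (maxSep f A m ε univ) / m : ℝ) : EReal)) atTop
      ≤ limsup (fun m : ℕ =>
        ((Real.log (maxSep f (fun i => A (i + n)) m ε univ) / m : ℝ) : EReal)) atTop := by
  set s : ℕ → ℕ := fun m => maxSep f A m ε univ with hs
  set s' : ℕ → ℕ := fun m => maxSep f (fun i => A (i + n)) m ε univ with hs'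
  have hs1 : ∀ m, 1 ≤ s m := fun m => maxSep_pos f hf A m hε
  have hs'1 : ∀ m, 1 ≤ s' m := fun m => maxSep_pos f hf _ m hε
  obtain ⟨C, hC1, hCb⟩ := maxSep_cover_bound f hf A n hε
  apply limsup_le_limsup_aux
  · intro m
    exact div_nonneg (Real.log_nonneg (by exact_mod_cast hs'1 m)) (Nat.cast_nonneg m)
  · intro c' c hc'0 hc'c hev
    obtain ⟨N, hN⟩ := eventually_atTop.mp hev
    have hlogC : ∀ᶠ m : ℕ in atTop, Real.log C / m < c - c' :=
      (tendsto_const_div_atTop_nhds_zero_nat (Real.log C)).eventually_lt_const (by linarith)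
    filter_upwards [hlogC, eventually_ge_atTop (N + n + 1)] with m hmC hm
    set m' := m - n with hm'
    have hmm : m = m' + n := by omega
    have hm'N : N ≤ m' := by omega
    have hm'1 : 1 ≤ m' := by omega
    have hm'0 : (0 : ℝ) < m' := by exact_mod_cast hm'1
    have hm0 : (0 : ℝ) < m := by
      have : (1 : ℕ) ≤ m := by omega
      exact_mod_cast this
    have hstep : s m ≤ C * s' m' := by rw [hmm]; exact hCb m'
    have hCpos : (0 : ℝ) < C := by exact_mod_cast hC1
    have hs'pos : (0 : ℝ) < (s' m' : ℝ) := by exact_mod_cast hs'1 m'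
    have hlog : Real.log (s m) ≤ Real.log C + Real.log (s' m') := by
      have hx0 : (0 : ℝ) < (s m : ℝ) := by exact_mod_cast hs1 m
      have hxy : (s m : ℝ) ≤ (C : ℝ) * (s' m' : ℝ) := by exact_mod_cast hstep
      have := Real.log_le_log hx0 hxy
      rwa [Real.log_mul (ne_of_gt hCpos) (ne_of_gt hs'pos)] at this
    have ha : Real.log (s' m') / (m' : ℝ) < c' := hN m' hm'N
    have hmono : Real.log (s' m') / (m : ℝ) ≤ Real.log (s' m') / (m' : ℝ) := by
      refine div_le_div_of_nonneg_left (Real.log_nonneg (by exact_mod_cast hs'1 m')) hm'0 ?_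
      have : m' ≤ m := by omega
      exact_mod_cast this
    have hsum : Real.log (s m) / (m : ℝ)
        ≤ Real.log C / m + Real.log (s' m') / m := by
      rw [← add_div]
      gcongr
    have : Real.log (s' m') / (m : ℝ) < c' := lt_of_le_of_lt hmono ha
    linarith

lemma sepEnt_shift (f : ℕ → X → X) (hf : ∀ m, Continuous (f m)) (A : ℕ → ℕ) (n : ℕ) :
    sepEnt f (fun i => A (i + n)) univ = sepEnt f A univ := by
  refine le_antisymm (iSup_le fun ε => ?_) (iSup_le fun ε => ?_)
  · exact le_iSup_of_le ε (limsup_shift_le f hf A n ε.2)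
  · exact le_iSup_of_le ε (limsup_le_shift f hf A n ε.2)

end Main

lemma nacomp_add {X : Type*} (f : ℕ → X → X) (i a b : ℕ) :
    nacomp f i (a + b) = nacomp f (i + a) b ∘ nacomp f i a := by
  induction b with
  | zero => simp [nacomp]
  | succ b ih =>
      show nacomp f i ((a + b) + 1) = _
      simp [nacomp, ih, Function.comp_assoc, Nat.add_assoc]

lemma nacomp_compSys {X : Type*} (f : ℕ → X → X) (m j : ℕ) :
    nacomp (compSys f m) 0 j = nacomp f 0 (j * m) := by
  induction j with
  | zero => rw [Nat.zero_mul]; rfl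
  | succ j ih =>
      show compSys f m (0 + j) ∘ nacomp (compSys f m) 0 j = _
      rw [ih, Nat.succ_mul, nacomp_add f 0 (j * m) m]
      simp [compSys]

lemma sepEnt_of_isEmpty {X : Type*} [PseudoMetricSpace X] [IsEmpty X] (g : ℕ → X → X)
    (B : ℕ → ℕ) : sepEnt g B univ = 0 := by
  have hms : ∀ m ε, maxSep g B m ε univ = 0 := by
    intro m ε
    have : {c | ∃ E : Finset X, IsSepSet g B m ε univ E ∧ E.card = c} = {0} := by
      ext c
      constructor
      · rintro ⟨E, _, rfl⟩
        simp [Finset.eq_empty_of_isEmpty E]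
      · rintro rfl
        exact ⟨∅, ⟨by simp, by simp⟩, rfl⟩
    rw [maxSep, this, csSup_singleton]
  have : sepEnt g B univ = ⨆ _ : {ε : ℝ // 0 < ε}, (0 : EReal) := by
    rw [sepEnt]
    congr 1
    funext ε
    simp only [hms, Nat.cast_zero, Real.log_zero, zero_div, EReal.coe_zero]
    exact limsup_const 0
  rw [this, iSup_const]

lemma maxSep_compSys_pow {X : Type*} [PseudoMetricSpace X] (f : ℕ → X → X) (k n m : ℕ)
    (ε : ℝ) :
    maxSep (compSys f (k ^ n)) (fun i => k ^ (i + 1)) m ε univ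
      = maxSep f (fun i => k ^ (i + n + 1)) m ε univ := by
  have hnac : ∀ j : ℕ, nacomp (compSys f (k ^ n)) 0 (k ^ (j + 1)) = nacomp f 0 (k ^ (j + n + 1)) := by
    intro j
    rw [nacomp_compSys, ← pow_add]
    have h : j + 1 + n = j + n + 1 := by omega
    rw [h]
  have hIs : ∀ E : Finset X, IsSepSet (compSys f (k ^ n)) (fun i => k ^ (i + 1)) m ε univ E
      ↔ IsSepSet f (fun i => k ^ (i + n + 1)) m ε univ E := by
    intro E
    unfold IsSepSet
    simp only [hnac]
  unfold maxSep
  congr 1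
  ext c
  simp only [hIs]

/-- For the sequence `A = {k^i}`, `h_A(f_{0,∞}^{k^n}) = h_A(f_{0,∞})`. -/
theorem sepEnt_compSys_pow {X : Type*} [MetricSpace X] [CompactSpace X]
    (f : ℕ → X → X) (hf : ∀ m, Continuous (f m))
    (k : ℕ) (hk : 1 ≤ k) (n : ℕ) (hn : 1 ≤ n) :
    sepEnt (compSys f (k ^ n)) (fun i => k ^ (i + 1)) univ
      = sepEnt f (fun i => k ^ (i + 1)) univ := by
  rcases isEmpty_or_nonempty X with hX | hX
  · rw [sepEnt_of_isEmpty, sepEnt_of_isEmpty]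
  · have h1 : sepEnt (compSys f (k ^ n)) (fun i => k ^ (i + 1)) univ
        = sepEnt f (fun i => k ^ (i + n + 1)) univ := by
      unfold sepEnt
      congr 1
      funext ε
      congr 1
      funext m
      rw [maxSep_compSys_pow]
    rw [h1]
    exact sepEnt_shift f hf (fun i => k ^ (i + 1)) n
end
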